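/- Let (D⁺, D⁻) be linearly separable training data in ℝ^p, let α = (α⁺, α⁻) ∈ ℕ × ℕ, let (E⁺, E⁻) be an α-bounded feature attack on (D⁺, D⁻), and let ĥ be an affine classifier minimizing the total 0-1 error err⁺(h, E⁺) + err⁻(h, E⁻) over all affine classifiers h. Then err⁺(ĥ, E⁺) + err⁻(ĥ, E⁻) ≤ α⁺ + α⁻, and consequently err⁺(ĥ, D⁺) ≤ 2α⁺ + α⁻ and err⁻(ĥ, D⁻) ≤ α⁺ + 2α⁻. -/

import Mathlib

open scoped Classical BigOperators

/-- Value of the affine classifier `h = (w, b)` at feature vector `x`. -/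
noncomputable def hval {p : ℕ} (h : (Fin p → ℝ) × ℝ) (x : Fin p → ℝ) : ℝ :=
  (∑ i, h.1 i * x i) + h.2

/-- Number of positive feature vectors in `S` misclassified by `h` (with multiplicity). -/
noncomputable def errPos {p : ℕ} (h : (Fin p → ℝ) × ℝ) (S : Multiset (Fin p → ℝ)) : ℕ :=
  Multiset.countP (fun x => hval h x ≤ 0) S

/-- Number of negative feature vectors in `S` misclassified by `h` (with multiplicity). -/
noncomputable def errNeg {p : ℕ} (h : (Fin p → ℝ) × ℝ) (S : Multiset (Fin p → ℝ)) : ℕ :=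
  Multiset.countP (fun x => 0 < hval h x) S

/-- `(Ep, En)` is an `(ap, an)`-bounded feature attack on `(Dp, Dn)`. -/
noncomputable def IsBFA {p : ℕ} (ap an : ℕ) (Dp Dn Ep En : Multiset (Fin p → ℝ)) : Prop :=
  Multiset.card Ep = Multiset.card Dp ∧
  Multiset.card En = Multiset.card Dn ∧
  Multiset.card (Ep - Dp) ≤ ap ∧
  Multiset.card (En - Dn) ≤ an

/-- `(Dp, Dn)` is linearly separable. -/
def LinSep {p : ℕ} (Dp Dn : Multiset (Fin p → ℝ)) : Prop :=
  ∃ h : (Fin p → ℝ) × ℝ, errPos h Dp = 0 ∧ errNeg h Dn = 0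

/-- `h` satisfies the majority constraint on `(Ep, En)`. -/
def Majority {p : ℕ} (h : (Fin p → ℝ) × ℝ) (Ep En : Multiset (Fin p → ℝ)) : Prop :=
  2 * errPos h Ep < Multiset.card Ep ∧ 2 * errNeg h En < Multiset.card En

lemma key_countP {p : ℕ} (P : (Fin p → ℝ) → Prop) [DecidablePred P]
    (S T : Multiset (Fin p → ℝ)) :
    Multiset.countP P S ≤ Multiset.countP P T + Multiset.card (S - T) := by
  conv_lhs => rw [← Multiset.sub_add_inter S T]
  rw [Multiset.countP_add]
  have h1 : Multiset.countP P (S - T) ≤ Multiset.card (S - T) :=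
    Multiset.countP_le_card _ _
  have h2 : Multiset.countP P (S ∩ T) ≤ Multiset.countP P T :=
    Multiset.countP_le_of_le _ (Multiset.inter_le_right (s := S) (t := T))
  omega

lemma card_sub_eq {α : Type*} [DecidableEq α] (S T : Multiset α)
    (h : Multiset.card S = Multiset.card T) :
    Multiset.card (S - T) = Multiset.card (T - S) := by
  have h1 := congrArg Multiset.card (Multiset.sub_add_inter S T)
  have h2 := congrArg Multiset.card (Multiset.sub_add_inter T S)
  rw [Multiset.card_add] at h1 h2
  rw [Multiset.inter_comm] at h2
  omega

theorem stmt10 {p : ℕ} (hp : 1 ≤ p)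
    (Dp Dn Ep En : Multiset (Fin p → ℝ)) (ap an : ℕ)
    (hsep : LinSep Dp Dn)
    (hBFA : IsBFA ap an Dp Dn Ep En)
    (hhat : (Fin p → ℝ) × ℝ)
    (hopt : ∀ h : (Fin p → ℝ) × ℝ,
      errPos hhat Ep + errNeg hhat En ≤ errPos h Ep + errNeg h En) :
    errPos hhat Ep + errNeg hhat En ≤ ap + an ∧
    errPos hhat Dp ≤ 2 * ap + an ∧
    errNeg hhat Dn ≤ ap + 2 * an := by
  obtain ⟨hs, hsP, hsN⟩ := hsep
  obtain ⟨hcP, hcN, haP, haN⟩ := hBFA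
  -- separator error on attacked data
  have e1 : errPos hs Ep ≤ ap := by
    have := key_countP (fun x => hval hs x ≤ 0) Ep Dp
    unfold errPos at *
    omega
  have e2 : errNeg hs En ≤ an := by
    have := key_countP (fun x => 0 < hval hs x) En Dn
    unfold errNeg at *
    omega
  have main : errPos hhat Ep + errNeg hhat En ≤ ap + an :=
    le_trans (hopt hs) (by omega)
  refine ⟨main, ?_, ?_⟩
  · have := key_countP (fun x => hval hhat x ≤ 0) Dp Ep
    have hc : Multiset.card (Dp - Ep) ≤ ap := by
      rw [card_sub_eq Dp Ep hcP.symm]; exact haP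
    unfold errPos errNeg at *
    omega
  · have := key_countP (fun x => 0 < hval hhat x) Dn En
    have hc : Multiset.card (Dn - En) ≤ an := by
      rw [card_sub_eq Dn En hcN.symm]; exact haN
    unfold errPos errNeg at *
    omega
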